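/- Let t > 0, k a nonzero integer, λ = 4πk, and let W_t^{-λ}(x+iy, u+iv) = e^{-λ(u·y - v·x)} p_{2t}^{-λ}(2y,2v), where p_t^μ(x,u) = c_n μ^n (sinh(μt))^{-n} e^{-(μ/4)coth(μt)(|x|²+|u|²)}. Then for every entire function G with |G|² integrable against W_t^{-λ} over ℝ^{2n} × [0,1)^{2n} and every s ∈ ℤ^n, the operator (Π̃_k(s)G)(z,w) = e^{-iπ s·w} G(z+s/(2k), w) preserves the norm: ∫∫ |Π̃_k(s)G(x+iy,u+iv)|² W_t^{-λ}(x+iy,u+iv) dx du dy dv = ∫∫ |G(x+iy,u+iv)|² W_t^{-λ}(x+iy,u+iv) dx du dy dv, where the x,u integrals are over [0,1)^n and the y,v integrals over ℝ^n, and G satisfies the quasi-periodicity G(z+m,w+n) = e^{2πik(w·m - z·n)}G(z,w). -/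

import Mathlib

open scoped BigOperators Real
open MeasureTheory

noncomputable section

def dot {n : ℕ} (x u : Fin n → ℝ) : ℝ := ∑ i, x i * u i

def dotC {n : ℕ} (z w : Fin n → ℂ) : ℂ := ∑ i, z i * w i

/-- `z = x + iy ∈ ℂ^n` from real and imaginary parts. -/
def cplx {n : ℕ} (x y : Fin n → ℝ) : Fin n → ℂ := fun i => (x i : ℂ) + (y i : ℂ) * Complex.I

/-- The heat kernel factor `p_t^μ(x,u) = c_n μ^n (sinh(μt))^{-n} e^{-(μ/4)coth(μt)(|x|²+|u|²)}`. -/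
def pKer {n : ℕ} (c : ℝ) (t μ : ℝ) (x u : Fin n → ℝ) : ℝ :=
  c * μ ^ n / Real.sinh (μ * t) ^ n *
    Real.exp (-(μ / 4) * (Real.cosh (μ * t) / Real.sinh (μ * t)) * (dot x x + dot u u))

/-- The weight `W_t^{-λ}(x+iy,u+iv) = e^{-λ(u·y - v·x)} p_{2t}^{-λ}(2y,2v)`. -/
def weightW {n : ℕ} (c : ℝ) (t lam : ℝ) (x y u v : Fin n → ℝ) : ℝ :=
  Real.exp (-lam * (dot u y - dot v x)) *
    pKer c (2 * t) (-lam) (fun i => 2 * y i) (fun i => 2 * v i)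

/-- Quasi-periodicity `G(z+m, w+n) = e^{2πik(w·m - z·n)} G(z,w)`. -/
def QuasiPeriodic {n : ℕ} (k : ℤ) (G : (Fin n → ℂ) × (Fin n → ℂ) → ℂ) : Prop :=
  ∀ (m ν : Fin n → ℤ) (z w : Fin n → ℂ),
    G (z + fun i => ((m i : ℤ) : ℂ), w + fun i => ((ν i : ℤ) : ℂ)) =
      Complex.exp (2 * π * Complex.I * (k : ℝ) *
        (dotC w (fun i => ((m i : ℤ) : ℂ)) - dotC z (fun i => ((ν i : ℤ) : ℂ)))) * G (z, w)

/-- `(Π̃_k(s)G)(z,w) = e^{-iπ s·w} G(z+s/(2k), w)`. -/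
def PiTilde {n : ℕ} (k : ℤ) (s : Fin n → ℤ) (G : (Fin n → ℂ) × (Fin n → ℂ) → ℂ) :
    (Fin n → ℂ) × (Fin n → ℂ) → ℂ := fun p =>
  Complex.exp (-Complex.I * π * ∑ i, (s i : ℂ) * p.2 i) *
    G (p.1 + fun i => (s i : ℂ) / (2 * k), p.2)

def unitBox (n : ℕ) : Set (Fin n → ℝ) := Set.univ.pi fun _ => Set.Ico (0 : ℝ) 1

/-- The region `(y,v,x,u) ∈ ℝ^n × ℝ^n × [0,1)^n × [0,1)^n`. -/
def fundRegion (n : ℕ) :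
    Set ((Fin n → ℝ) × (Fin n → ℝ) × (Fin n → ℝ) × (Fin n → ℝ)) :=
  Set.univ ×ˢ Set.univ ×ˢ unitBox n ×ˢ unitBox n

/-! ### Auxiliary material -/

namespace PiTildeAux

abbrev Pn (n : ℕ) := (Fin n → ℝ) × (Fin n → ℝ) × (Fin n → ℝ) × (Fin n → ℝ)

def intLat (n : ℕ) : AddSubgroup (Fin n → ℝ) where
  carrier := Set.range fun m : Fin n → ℤ => fun i => (m i : ℝ)
  add_mem' := by rintro _ _ ⟨m, rfl⟩ ⟨m', rfl⟩; exact ⟨m + m', by funext i; simp⟩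
  zero_mem' := ⟨0, by funext i; simp⟩
  neg_mem' := by rintro _ ⟨m, rfl⟩; exact ⟨-m, by funext i; simp⟩

def bigLat (n : ℕ) : AddSubgroup (Pn n) :=
  AddSubgroup.prod ⊥ (AddSubgroup.prod ⊥ ((intLat n).prod (intLat n)))

instance (n : ℕ) : Countable (intLat n) := by
  have : Set.Countable (Set.range fun m : Fin n → ℤ => fun i => (m i : ℝ)) :=
    Set.countable_range _
  exact this.to_subtype

instance (n : ℕ) : Countable (bigLat n) := by
  have : ((bigLat n : Set (Pn n))).Countable := by
    refine Set.Countable.mono ?_ (Set.Countable.prod (Set.countable_singleton 0)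
      (Set.Countable.prod (Set.countable_singleton 0)
        (Set.Countable.prod (Set.countable_range fun m : Fin n → ℤ => fun i => (m i : ℝ))
          (Set.countable_range fun m : Fin n → ℤ => fun i => (m i : ℝ)))))
    rintro ⟨a, b, cc, d⟩ h
    obtain ⟨h1, h2, h3, h4⟩ := h
    exact ⟨h1, h2, h3, h4⟩
  exact this.to_subtype

instance (n : ℕ) : Measure.IsAddLeftInvariant (volume : Measure (Pn n)) := by
  have h : (volume : Measure (Pn n))
      = (volume : Measure (Fin n → ℝ)).prod ((volume : Measure (Fin n → ℝ)).prod
          ((volume : Measure (Fin n → ℝ)).prod (volume : Measure (Fin n → ℝ)))) := rfl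
  haveI h2 : Measure.IsAddLeftInvariant ((volume : Measure (Fin n → ℝ)).prod
      ((volume : Measure (Fin n → ℝ)).prod (volume : Measure (Fin n → ℝ)))) :=
    Measure.prod.instIsAddLeftInvariant
  exact h ▸ Measure.prod.instIsAddLeftInvariant

instance (n : ℕ) : Measure.IsAddRightInvariant (volume : Measure (Pn n)) := by
  have h : (volume : Measure (Pn n))
      = (volume : Measure (Fin n → ℝ)).prod ((volume : Measure (Fin n → ℝ)).prod
          ((volume : Measure (Fin n → ℝ)).prod (volume : Measure (Fin n → ℝ)))) := rfl
  haveI h2 : Measure.IsAddRightInvariant ((volume : Measure (Fin n → ℝ)).prod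
      ((volume : Measure (Fin n → ℝ)).prod (volume : Measure (Fin n → ℝ)))) :=
    Measure.prod.instIsAddRightInvariant
  exact h ▸ Measure.prod.instIsAddRightInvariant

lemma meas_unitBox (n : ℕ) : MeasurableSet (unitBox n) :=
  MeasurableSet.univ_pi fun _ => measurableSet_Ico

lemma meas_fundRegion (n : ℕ) : MeasurableSet (fundRegion n) :=
  MeasurableSet.univ.prod (MeasurableSet.univ.prod
    ((meas_unitBox n).prod (meas_unitBox n)))

lemma intLat_exu (n : ℕ) (x : Fin n → ℝ) :
    ∃! g : intLat n, (g : Fin n → ℝ) + x ∈ unitBox n := by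
  refine ⟨⟨fun i => ((-⌊x i⌋ : ℤ) : ℝ), ⟨fun i => -⌊x i⌋, rfl⟩⟩, ?_, ?_⟩
  · intro i _
    constructor
    · have := Int.floor_le (x i); simp only [Pi.add_apply]; push_cast; linarith
    · have := Int.lt_floor_add_one (x i); simp only [Pi.add_apply]; push_cast; linarith
  · rintro ⟨y', m, rfl⟩ h
    apply Subtype.ext
    funext i
    have hi := h i (Set.mem_univ i)
    simp only [Pi.add_apply] at hi
    obtain ⟨h1, h2⟩ := hi
    have hmi : m i = -⌊x i⌋ := by
      have : ⌊x i⌋ = -m i := by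
        rw [Int.floor_eq_iff]
        constructor
        · push_cast; push_cast at h2; linarith
        · push_cast; push_cast at h1; linarith
      omega
    simp only [hmi]

lemma bigLat_fd (n : ℕ) (q : Pn n) :
    IsAddFundamentalDomain (bigLat n) {p : Pn n | p - q ∈ fundRegion n} volume := by
  refine IsAddFundamentalDomain.mk' ?_ ?_
  · exact ((meas_fundRegion n).preimage (measurable_id.sub measurable_const)).nullMeasurableSet
  · rintro ⟨p1, p2, p3, p4⟩
    obtain ⟨q1, q2, q3, q4⟩ := q
    obtain ⟨g3, hg3, hg3u⟩ := intLat_exu n (p3 - q3)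
    obtain ⟨g4, hg4, hg4u⟩ := intLat_exu n (p4 - q4)
    have hmem : ((0, 0, (g3 : Fin n → ℝ), (g4 : Fin n → ℝ)) : Pn n) ∈ bigLat n := by
      simp only [bigLat, AddSubgroup.mem_prod, AddSubgroup.mem_bot]
      exact ⟨trivial, trivial, g3.2, g4.2⟩
    refine ⟨⟨_, hmem⟩, ?_, ?_⟩
    · show ((0, 0, (g3 : Fin n → ℝ), (g4 : Fin n → ℝ)) : Pn n) + (p1, p2, p3, p4) - (q1, q2, q3, q4)
        ∈ fundRegion n
      refine ⟨Set.mem_univ _, Set.mem_univ _, ?_, ?_⟩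
      · show (g3 : Fin n → ℝ) + p3 - q3 ∈ unitBox n
        rwa [add_sub_assoc]
      · show (g4 : Fin n → ℝ) + p4 - q4 ∈ unitBox n
        rwa [add_sub_assoc]
    · rintro ⟨⟨a, b, cc, d⟩, hm⟩ hin
      simp only [bigLat, AddSubgroup.mem_prod, AddSubgroup.mem_bot] at hm
      obtain ⟨ha, hb, hc, hd⟩ := hm
      have hin' : ((a, b, cc, d) : Pn n) + (p1, p2, p3, p4) - (q1, q2, q3, q4)
          ∈ fundRegion n := hin
      obtain ⟨-, -, h3, h4⟩ := hin'
      have e3 : (⟨cc, hc⟩ : intLat n) = g3 := by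
        apply hg3u
        show cc + (p3 - q3) ∈ unitBox n
        rw [← add_sub_assoc]
        exact h3
      have e4 : (⟨d, hd⟩ : intLat n) = g4 := by
        apply hg4u
        show d + (p4 - q4) ∈ unitBox n
        rw [← add_sub_assoc]
        exact h4
      apply Subtype.ext
      show ((a, b, cc, d) : Pn n) = (0, 0, (g3 : Fin n → ℝ), (g4 : Fin n → ℝ))
      rw [ha, hb, ← congrArg Subtype.val e3, ← congrArg Subtype.val e4]

/-! ### dot lemmas -/

lemma dot_comm {n : ℕ} (x u : Fin n → ℝ) : dot x u = dot u x := by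
  simp [dot, mul_comm]

lemma dot_add_right {n : ℕ} (x u u' : Fin n → ℝ) :
    dot x (u + u') = dot x u + dot x u' := by
  simp [dot, mul_add, Finset.sum_add_distrib]

lemma dot_add_left {n : ℕ} (x x' u : Fin n → ℝ) :
    dot (x + x') u = dot x u + dot x' u := by
  simp [dot, add_mul, Finset.sum_add_distrib]

lemma norm_exp_sq (z : ℂ) : ‖Complex.exp z‖ ^ 2 = Real.exp (2 * z.re) := by
  rw [Complex.norm_exp, sq, ← Real.exp_add, two_mul]

lemma dotC_cplx_int {n : ℕ} (u v : Fin n → ℝ) (M : Fin n → ℤ) :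
    dotC (cplx u v) (fun i => ((M i : ℤ) : ℂ)) =
      ((dot u fun i => (M i : ℝ)) : ℝ) + ((dot v fun i => (M i : ℝ)) : ℝ) * Complex.I := by
  simp only [dotC, cplx, dot]
  push_cast
  rw [Finset.sum_mul, ← Finset.sum_add_distrib]
  exact Finset.sum_congr rfl fun i _ => by ring

lemma sum_int_cplx {n : ℕ} (s : Fin n → ℤ) (u v : Fin n → ℝ) :
    (∑ i, (s i : ℂ) * cplx u v i) =
      ((dot (fun i => (s i : ℝ)) u : ℝ) : ℂ) + ((dot (fun i => (s i : ℝ)) v : ℝ) : ℂ) * Complex.I := by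
  simp only [cplx, dot]
  push_cast
  rw [Finset.sum_mul, ← Finset.sum_add_distrib]
  exact Finset.sum_congr rfl fun i _ => by ring

lemma cplx_add_int {n : ℕ} (x y : Fin n → ℝ) (M : Fin n → ℤ) :
    cplx (((fun i => (M i : ℝ)) + x)) y = (fun i => ((M i : ℤ) : ℂ)) + cplx x y := by
  funext i
  simp [cplx]
  push_cast
  ring


lemma dot_add_right' : True := trivial

lemma key_shift {n : ℕ} (c t : ℝ) (k : ℤ) (hk : k ≠ 0) (s : Fin n → ℤ)
    (G : (Fin n → ℂ) × (Fin n → ℂ) → ℂ) (x y u v : Fin n → ℝ) :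
    ‖PiTilde k s G (cplx x y, cplx u v)‖ ^ 2 * weightW c t (4 * π * k) x y u v
      = ‖G (cplx (x + fun i => (s i : ℝ) / (2 * k)) y, cplx u v)‖ ^ 2 *
          weightW c t (4 * π * k) (x + fun i => (s i : ℝ) / (2 * k)) y u v := by
  have hkR : (k : ℝ) ≠ 0 := Int.cast_ne_zero.mpr hk
  have harg : (cplx x y + fun i => (s i : ℂ) / (2 * (k : ℂ)))
      = cplx (x + fun i => (s i : ℝ) / (2 * k)) y := by
    funext i
    simp only [Pi.add_apply, cplx]
    push_cast
    ring
  simp only [PiTilde]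
  rw [harg, norm_mul, mul_pow, norm_exp_sq, sum_int_cplx]
  set A := dot (fun i => (s i : ℝ)) u with hA
  set B := dot (fun i => (s i : ℝ)) v with hB
  have hre : (-Complex.I * (π : ℂ) * ((A : ℂ) + (B : ℂ) * Complex.I)).re = π * B := by
    simp [Complex.mul_re, Complex.mul_im]
  rw [hre]
  have hva : dot v (fun i => (s i : ℝ) / (2 * (k : ℝ))) = B / (2 * k) := by
    rw [hB, dot, dot, Finset.sum_div]
    exact Finset.sum_congr rfl fun i _ => by field_simp
  unfold weightW
  rw [dot_add_right, hva]
  have hexp : Real.exp (-(4 * π * (k:ℝ)) * (dot u y - (dot v x + B / (2 * k))))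
      = Real.exp (2 * (π * B)) * Real.exp (-(4 * π * (k:ℝ)) * (dot u y - dot v x)) := by
    rw [← Real.exp_add]
    congr 1
    field_simp
    ring
  rw [hexp]
  ring

lemma key_inv {n : ℕ} (c t : ℝ) (k : ℤ) (G : (Fin n → ℂ) × (Fin n → ℂ) → ℂ)
    (hG : QuasiPeriodic k G) (g : bigLat n) (p : Pn n) :
    ‖G (cplx (g +ᵥ p).2.2.1 (g +ᵥ p).1, cplx (g +ᵥ p).2.2.2 (g +ᵥ p).2.1)‖ ^ 2 *
        weightW c t (4 * π * k) (g +ᵥ p).2.2.1 (g +ᵥ p).1 (g +ᵥ p).2.2.2 (g +ᵥ p).2.1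
      = ‖G (cplx p.2.2.1 p.1, cplx p.2.2.2 p.2.1)‖ ^ 2 *
        weightW c t (4 * π * k) p.2.2.1 p.1 p.2.2.2 p.2.1 := by
  obtain ⟨⟨g1, g2, g3, g4⟩, hm⟩ := g
  obtain ⟨y, v, x, u⟩ := p
  simp only [bigLat, AddSubgroup.mem_prod, AddSubgroup.mem_bot] at hm
  obtain ⟨h1, h2, ⟨M, hM⟩, ⟨N, hN⟩⟩ := hm
  subst h1 h2 hM hN
  have hvadd : ((⟨((0 : Fin n → ℝ), (0 : Fin n → ℝ), (fun i => (M i : ℝ)), (fun i => (N i : ℝ))), by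
      simp only [bigLat, AddSubgroup.mem_prod, AddSubgroup.mem_bot]
      exact ⟨trivial, trivial, ⟨M, rfl⟩, ⟨N, rfl⟩⟩⟩ : bigLat n) +ᵥ
      ((y, v, x, u) : Pn n))
      = (y, v, (fun i => (M i : ℝ)) + x, (fun i => (N i : ℝ)) + u) := by
    show ((0 : Fin n → ℝ) + y, (0 : Fin n → ℝ) + v, (fun i => (M i : ℝ)) + x,
      (fun i => (N i : ℝ)) + u) = _
    rw [zero_add, zero_add]
  rw [hvadd]
  simp only
  rw [cplx_add_int x y M, cplx_add_int u v N, add_comm ((fun i => ((M i : ℤ) : ℂ)))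
    (cplx x y), add_comm ((fun i => ((N i : ℤ) : ℂ))) (cplx u v), hG M N (cplx x y) (cplx u v)]
  rw [norm_mul, mul_pow, norm_exp_sq, dotC_cplx_int, dotC_cplx_int]
  set A := dot u (fun i => (M i : ℝ)) with hAd
  set B := dot v (fun i => (M i : ℝ)) with hBd
  set C := dot x (fun i => (N i : ℝ)) with hCd
  set D := dot y (fun i => (N i : ℝ)) with hDd
  have hre : ((2 : ℂ) * (π : ℂ) * Complex.I * ((k : ℝ) : ℂ) *
      (((A : ℂ) + (B : ℂ) * Complex.I) - ((C : ℂ) + (D : ℂ) * Complex.I))).re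
      = -(2 * π * k * (B - D)) := by
    simp [Complex.mul_re, Complex.mul_im]
    try ring
  rw [hre]
  unfold weightW
  rw [dot_add_left, dot_add_right]
  have hcm : dot (fun i => (N i : ℝ)) y = D := by rw [hDd, dot_comm]
  have hcm2 : dot v (fun i => (M i : ℝ)) = B := rfl
  rw [hcm]
  have hexp : Real.exp (2 * -(2 * π * (k:ℝ) * (B - D))) *
      Real.exp (-(4 * π * (k:ℝ)) * (D + dot u y - (B + dot v x)))
      = Real.exp (-(4 * π * (k:ℝ)) * (dot u y - dot v x)) := by
    rw [← Real.exp_add]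
    congr 1
    ring
  calc Real.exp (2 * -(2 * π * (k:ℝ) * (B - D))) * ‖G (cplx x y, cplx u v)‖ ^ 2 *
        (Real.exp (-(4 * π * (k:ℝ)) * (D + dot u y - (B + dot v x))) *
          pKer c (2 * t) (-(4 * π * (k:ℝ))) (fun i => 2 * y i) (fun i => 2 * v i))
      = ‖G (cplx x y, cplx u v)‖ ^ 2 *
        ((Real.exp (2 * -(2 * π * (k:ℝ) * (B - D))) *
          Real.exp (-(4 * π * (k:ℝ)) * (D + dot u y - (B + dot v x)))) *
          pKer c (2 * t) (-(4 * π * (k:ℝ))) (fun i => 2 * y i) (fun i => 2 * v i)) := by ring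
    _ = _ := by rw [hexp]

end PiTildeAux



/-- The operators `Π̃_k(s)` preserve the `𝓑_{t,Γ}^{4πk}`-norm: for every entire
quasi-periodic `G` with `|G|²` integrable against `W_t^{-λ}` over
`ℝ^{2n} × [0,1)^{2n}`, and every `s ∈ ℤ^n`,
`∫∫ |Π̃_k(s)G|² W_t^{-λ} = ∫∫ |G|² W_t^{-λ}` (with `λ = 4πk`). -/
theorem PiTilde_isometry {n : ℕ} (c t : ℝ) (ht : 0 < t) (k : ℤ) (hk : k ≠ 0)
    (G : (Fin n → ℂ) × (Fin n → ℂ) → ℂ) (hGent : Differentiable ℂ G)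
    (hG : QuasiPeriodic k G)
    (hInt : IntegrableOn
      (fun p : (Fin n → ℝ) × (Fin n → ℝ) × (Fin n → ℝ) × (Fin n → ℝ) =>
        ‖G (cplx p.2.2.1 p.1, cplx p.2.2.2 p.2.1)‖ ^ 2 *
          weightW c t (4 * π * k) p.2.2.1 p.1 p.2.2.2 p.2.1)
      (fundRegion n))
    (s : Fin n → ℤ) :
    (∫ p in fundRegion n,
        ‖PiTilde k s G (cplx p.2.2.1 p.1, cplx p.2.2.2 p.2.1)‖ ^ 2 *
          weightW c t (4 * π * k) p.2.2.1 p.1 p.2.2.2 p.2.1) =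
      ∫ p in fundRegion n,
        ‖G (cplx p.2.2.1 p.1, cplx p.2.2.2 p.2.1)‖ ^ 2 *
          weightW c t (4 * π * k) p.2.2.1 p.1 p.2.2.2 p.2.1 := by
  classical
  open PiTildeAux in
  have hkR : (k : ℝ) ≠ 0 := Int.cast_ne_zero.mpr hk
  set q : PiTildeAux.Pn n := (0, 0, (fun i => (s i : ℝ) / (2 * (k : ℝ))), 0) with hq
  set f : PiTildeAux.Pn n → ℝ := fun p =>
    ‖G (cplx p.2.2.1 p.1, cplx p.2.2.2 p.2.1)‖ ^ 2 *
      weightW c t (4 * π * k) p.2.2.1 p.1 p.2.2.2 p.2.1 with hf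
  have hfq : (fun p : PiTildeAux.Pn n =>
      ‖PiTilde k s G (cplx p.2.2.1 p.1, cplx p.2.2.2 p.2.1)‖ ^ 2 *
        weightW c t (4 * π * k) p.2.2.1 p.1 p.2.2.2 p.2.1)
      = fun p : PiTildeAux.Pn n => f (p + q) := by
    funext p
    rw [hf]
    simp only [hq, Prod.fst_add, Prod.snd_add, add_zero]
    exact PiTildeAux.key_shift c t k hk s G p.2.2.1 p.1 p.2.2.2 p.2.1
  rw [hfq]
  have step1 : ∫ p in fundRegion n, f (p + q)
      = ∫ p in {p : PiTildeAux.Pn n | p - q ∈ fundRegion n}, f p := by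
    have hfr : fundRegion n = (· + q) ⁻¹' {p : PiTildeAux.Pn n | p - q ∈ fundRegion n} := by
      ext p
      simp [Set.mem_preimage, add_sub_cancel_right]
    conv_lhs => rw [hfr]
    exact (measurePreserving_add_right volume q).setIntegral_preimage_emb
      (MeasurableEquiv.addRight q).measurableEmbedding f _
  have hinv : ∀ (g : PiTildeAux.bigLat n) (p : PiTildeAux.Pn n), f (g +ᵥ p) = f p := by
    intro g p
    rw [hf]
    exact PiTildeAux.key_inv c t k G hG g p
  have step2 : ∫ p in {p : PiTildeAux.Pn n | p - q ∈ fundRegion n}, f p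
      = ∫ p in {p : PiTildeAux.Pn n | p - (0 : PiTildeAux.Pn n) ∈ fundRegion n}, f p :=
    (PiTildeAux.bigLat_fd n q).setIntegral_eq (PiTildeAux.bigLat_fd n 0) hinv
  have h0 : {p : PiTildeAux.Pn n | p - (0 : PiTildeAux.Pn n) ∈ fundRegion n} = fundRegion n := by
    simp
  rw [step1, step2, h0]
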